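/- Optimality rate of deterministic R-OpEx for monotone nonsmooth BVI: There is an absolute constant C > 0 such that the following holds. Let X ⊆ ℝ^n be nonempty compact convex with diameter D_X > 0, let F, H : ℝ^n → ℝ^n be monotone on X with ‖F(x₁) − F(x₂)‖ ≤ L_F‖x₁ − x₂‖ + M_F and ‖H(x₁) − H(x₂)‖ ≤ L_H‖x₁ − x₂‖ + M_H for all x₁, x₂ ∈ X, and suppose the solution set X_F^* of VI(F, X) is nonempty. Fix an integer K ≥ 2, set η := K^{−1/4} and γ := D_X/(8D_X(L_F + ηL_H) + √(K(M_F² + η²M_H²))) (assume the denominator is positive), and run deterministic R-OpEx with τ_k = θ_k = 1, η_k = η, γ_k = γ for all k, producing x̄_K := (1/(K−1))·Σ_{k=1}^{K−1} x_{k+1}. Then Gap(x̄_K, H, X_F^*) := sup_{x ∈ X_F^*} ⟨H(x), x̄_K − x⟩ ≤ C·D_X·(D_X L_F/K^{3/4} + D_X L_H/K + M_F/K^{1/4} + M_H/K^{1/2}). -/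

import Mathlib

set_option maxHeartbeats 1000000

open RealInnerProductSpace

/-- The gap function `Gap(x̃, G, S) = sup_{y ∈ S} ⟪G y, x̃ − y⟫`, valued in the
extended reals. -/
noncomputable def Gap {n : ℕ} (G : EuclideanSpace ℝ (Fin n) → EuclideanSpace ℝ (Fin n))
    (S : Set (EuclideanSpace ℝ (Fin n))) (xt : EuclideanSpace ℝ (Fin n)) : EReal :=
  ⨆ y ∈ S, ((⟪G y, xt - y⟫ : ℝ) : EReal)

/-- The solution set `X_F^*` of the variational inequality `VI(F, X)`. -/
def VISol {n : ℕ} (F : EuclideanSpace ℝ (Fin n) → EuclideanSpace ℝ (Fin n))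
    (X : Set (EuclideanSpace ℝ (Fin n))) : Set (EuclideanSpace ℝ (Fin n)) :=
  {x | x ∈ X ∧ ∀ y ∈ X, 0 ≤ ⟪F x, y - x⟫}

theorem three_point {E : Type*} [NormedAddCommGroup E] [InnerProductSpace ℝ E] {X : Set E}
    (hX : Convex ℝ X) {g xk xp z : E} (hxp : xp ∈ X) (hz : z ∈ X) {c : ℝ}
    (hmin : ∀ w ∈ X, ⟪g, xp⟫ + c * ‖xp - xk‖ ^ 2 ≤ ⟪g, w⟫ + c * ‖w - xk‖ ^ 2) :
    ⟪g, xp - z⟫ ≤ c * (‖xk - z‖ ^ 2 - ‖xp - z‖ ^ 2 - ‖xp - xk‖ ^ 2) := by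
  set A : ℝ := ⟪g, z - xp⟫ + 2 * c * ⟪xp - xk, z - xp⟫ with hA
  have key : ∀ t : ℝ, 0 < t → t ≤ 1 → -(c * t * ‖z - xp‖ ^ 2) ≤ A := by
    intro t ht0 ht1
    have hmem : xp + t • (z - xp) ∈ X := by
      have := hX hxp hz (by linarith : (0:ℝ) ≤ 1 - t) ht0.le (by ring)
      convert this using 1
      module
    have h1 := hmin _ hmem
    have e1 : ⟪g, xp + t • (z - xp)⟫ = ⟪g, xp⟫ + t * ⟪g, z - xp⟫ := by
      rw [inner_add_right, real_inner_smul_right]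
    have e2 : ‖xp + t • (z - xp) - xk‖ ^ 2
        = ‖xp - xk‖ ^ 2 + 2 * (t * ⟪xp - xk, z - xp⟫) + t ^ 2 * ‖z - xp‖ ^ 2 := by
      have : xp + t • (z - xp) - xk = (xp - xk) + t • (z - xp) := by abel
      rw [this, norm_add_sq_real, real_inner_smul_right, norm_smul, Real.norm_eq_abs]
      rw [mul_pow, sq_abs]
    rw [e1, e2] at h1
    have h2 : 0 ≤ t * A + c * t ^ 2 * ‖z - xp‖ ^ 2 := by rw [hA]; nlinarith [h1]
    nlinarith [sq_nonneg ‖z - xp‖, mul_pos ht0 ht0]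
  have hA0 : 0 ≤ A := by
    by_contra h
    push_neg at h
    rcases le_or_gt (c * ‖z - xp‖ ^ 2) 0 with hr | hr
    · have := key 1 one_pos le_rfl
      nlinarith
    · set t := min 1 (-A / (2 * (c * ‖z - xp‖ ^ 2))) with htdef
      have ht0 : 0 < t := lt_min one_pos (div_pos (by linarith) (by positivity))
      have ht1 : t ≤ 1 := min_le_left _ _
      have := key t ht0 ht1
      have h3 : c * t * ‖z - xp‖ ^ 2 ≤ -A / 2 := by
        have ht2 : t ≤ -A / (2 * (c * ‖z - xp‖ ^ 2)) := min_le_right _ _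
        have := mul_le_mul_of_nonneg_left ht2 hr.le
        calc c * t * ‖z - xp‖ ^ 2 = (c * ‖z - xp‖ ^ 2) * t := by ring
        _ ≤ (c * ‖z - xp‖ ^ 2) * (-A / (2 * (c * ‖z - xp‖ ^ 2))) := this
        _ = -A / 2 := by
          have hq := hr.ne'
          calc (c * ‖z - xp‖ ^ 2) * (-A / (2 * (c * ‖z - xp‖ ^ 2)))
              = (-A) * ((c * ‖z - xp‖ ^ 2) / (c * ‖z - xp‖ ^ 2)) / 2 := by ring
            _ = -A / 2 := by rw [div_self hq, mul_one]
      linarith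
  have hpol : 2 * ⟪xp - xk, z - xp⟫ = ‖xk - z‖ ^ 2 - ‖xp - xk‖ ^ 2 - ‖z - xp‖ ^ 2 := by
    have : (xp - xk) + (z - xp) = z - xk := by abel
    have h4 := norm_add_sq_real (xp - xk) (z - xp)
    rw [this] at h4
    have h5 : ‖xk - z‖ = ‖z - xk‖ := norm_sub_rev _ _
    rw [h5]; linarith
  have hiz : ⟪g, xp - z⟫ = -⟪g, z - xp⟫ := by rw [← inner_neg_right]; congr 1; abel
  have h6 : ‖xp - z‖ = ‖z - xp‖ := norm_sub_rev _ _
  rw [hiz, h6]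
  have h7 : -⟪g, z - xp⟫ ≤ 2 * c * ⟪xp - xk, z - xp⟫ := by linarith
  calc -⟪g, z - xp⟫ ≤ 2 * c * ⟪xp - xk, z - xp⟫ := h7
  _ = c * (2 * ⟪xp - xk, z - xp⟫) := by ring
  _ = c * (‖xk - z‖ ^ 2 - ‖z - xp‖ ^ 2 - ‖xp - xk‖ ^ 2) := by rw [hpol]; ring

lemma scal1 {w d c Lb Mb d' : ℝ} (h1 : w ≤ Lb * d' + Mb) (hdnn : 0 ≤ d) (hLbnn : 0 ≤ Lb) :
    w * d - c * d ^ 2 ≤ Lb / 2 * d' ^ 2 + (Lb / 2 * d ^ 2 + Mb * d - c * d ^ 2) := by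
  nlinarith only [mul_nonneg hLbnn (sq_nonneg (d' - d)), mul_le_mul_of_nonneg_right h1 hdnn]

lemma scal2 {DX s LF LH MF MH : ℝ} (hDX : 0 ≤ DX) (hs : 0 < s) (hMF : 0 ≤ MF) (hMH : 0 ≤ MH) :
    20 * DX ^ 2 * (LF + s⁻¹ * LH) + 6 * DX * (s ^ 2 * (MF + s⁻¹ * MH))
      ≤ 20 * DX * (DX * LF + DX * LH / s + MF * s ^ 2 + MH * s) := by
  have e2 : s ^ 2 * (MF + s⁻¹ * MH) = MF * s ^ 2 + MH * s := by
    field_simp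
  rw [e2]
  have e3 : 20 * DX ^ 2 * (LF + s⁻¹ * LH) = 20 * DX * (DX * LF + DX * LH / s) := by
    field_simp
  rw [e3]
  nlinarith only [mul_nonneg (mul_nonneg hDX hMF) (sq_nonneg s),
    mul_nonneg (mul_nonneg hDX hMH) hs.le]

section main
variable {n : ℕ} {X : Set (EuclideanSpace ℝ (Fin n))}
  {F H : EuclideanSpace ℝ (Fin n) → EuclideanSpace ℝ (Fin n)}
  {LF MF LH MH DX : ℝ} {K : ℕ} {η γ : ℝ} {x : ℕ → EuclideanSpace ℝ (Fin n)}

lemma ropex_core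
        (hXne : X.Nonempty) (hXc : IsCompact X) (hXconv : Convex ℝ X)
        (hDX : DX = Metric.diam X / 2) (hDXpos : 0 < DX)
        (hLF : 0 ≤ LF) (hMF : 0 ≤ MF) (hLH : 0 ≤ LH) (hMH : 0 ≤ MH)
        (hFmono : ∀ a ∈ X, ∀ b ∈ X, 0 ≤ ⟪F a - F b, a - b⟫)
        (hHmono : ∀ a ∈ X, ∀ b ∈ X, 0 ≤ ⟪H a - H b, a - b⟫)
        (hFlip : ∀ a ∈ X, ∀ b ∈ X, ‖F a - F b‖ ≤ LF * ‖a - b‖ + MF)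
        (hHlip : ∀ a ∈ X, ∀ b ∈ X, ‖H a - H b‖ ≤ LH * ‖a - b‖ + MH)
        (hK : 2 ≤ K)
        (hη : η = (K : ℝ) ^ (-(1 / 4 : ℝ)))
        (hden : 0 < 8 * DX * (LF + η * LH) + Real.sqrt (K * (MF ^ 2 + η ^ 2 * MH ^ 2)))
        (hγ : γ = DX / (8 * DX * (LF + η * LH) + Real.sqrt (K * (MF ^ 2 + η ^ 2 * MH ^ 2))))
        (hx01 : x 0 = x 1) (hx1 : x 1 ∈ X)
        (hxmem : ∀ k, 1 ≤ k → k ≤ K - 1 → x (k + 1) ∈ X)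
        (hopt : ∀ k, 1 ≤ k → k ≤ K - 1 → ∀ z ∈ X,
          ⟪F (x k) + η • H (x k)
              + (F (x k) + η • H (x k) - F (x (k - 1)) - η • H (x (k - 1))), x (k + 1)⟫
              + 1 / (2 * γ) * ‖x (k + 1) - x k‖ ^ 2
            ≤ ⟪F (x k) + η • H (x k)
              + (F (x k) + η • H (x k) - F (x (k - 1)) - η • H (x (k - 1))), z⟫
              + 1 / (2 * γ) * ‖z - x k‖ ^ 2)
        (z : EuclideanSpace ℝ (Fin n)) (hzX : z ∈ X)
        (hzsol : ∀ y ∈ X, 0 ≤ ⟪F z, y - z⟫) :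
        ⟪H z, (((K : ℝ) - 1)⁻¹ • ∑ k ∈ Finset.Icc 1 (K - 1), x (k + 1)) - z⟫
          ≤ 40 * DX * (DX * LF / (K : ℝ) ^ ((3 : ℝ) / 4) + DX * LH / (K : ℝ)
              + MF / (K : ℝ) ^ ((1 : ℝ) / 4) + MH / (K : ℝ) ^ ((1 : ℝ) / 2)) := by
  -- basic setup
  set N := K - 1 with hN
  have hN1 : 1 ≤ N := by omega
  have hKN : K = N + 1 := by omega
  have hK0 : (0:ℝ) < (K:ℝ) := by positivity
  have hK1 : (1:ℝ) ≤ (K:ℝ) := by exact_mod_cast Nat.one_le_of_lt hK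
  have hK2 : (2:ℝ) ≤ (K:ℝ) := by exact_mod_cast hK
  have hηpos : 0 < η := by rw [hη]; positivity
  set Lb : ℝ := LF + η * LH with hLb
  set Mb : ℝ := MF + η * MH with hMb
  set Q2 : ℝ := MF ^ 2 + η ^ 2 * MH ^ 2 with hQ2
  set S : ℝ := 8 * DX * Lb + Real.sqrt ((K:ℝ) * Q2) with hS
  have hSK : (K:ℝ) * Q2 = ((K:ℕ):ℝ) * Q2 := by norm_num
  have hSpos : 0 < S := hden
  have hγpos : 0 < γ := by rw [hγ]; exact div_pos hDXpos hden
  have hLbnn : 0 ≤ Lb := by positivity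
  have hMbnn : 0 ≤ Mb := by positivity
  have hQ2nn : 0 ≤ Q2 := by positivity
  set c : ℝ := 1 / (2 * γ) with hc
  have hcpos : 0 < c := by positivity
  have hcS : c = S / (2 * DX) := by
    rw [hc, hγ]; field_simp
  have hγS : γ * S = DX := by rw [hγ]; field_simp
  have hcL : 4 * Lb ≤ c := by
    rw [hcS]
    rw [le_div_iff₀ (by positivity)]
    have h8 : 0 ≤ Real.sqrt ((K:ℝ) * Q2) := Real.sqrt_nonneg _
    nlinarith only [h8, hS, mul_nonneg hDXpos.le hLbnn]
  have hcγ : 2 * γ * c = 1 := by rw [hc]; field_simp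
  -- iterates in X, diameter bound
  have hiter : ∀ j, j ≤ N + 1 → x j ∈ X := by
    intro j hj
    match j with
    | 0 => rw [hx01]; exact hx1
    | 1 => exact hx1
    | (k+2) => exact hxmem (k+1) (by omega) (by omega)
  have hdiam : ∀ a ∈ X, ∀ b ∈ X, ‖a - b‖ ≤ 2 * DX := by
    intro a ha b hb
    have := Metric.dist_le_diam_of_mem hXc.isBounded ha hb
    rw [dist_eq_norm] at this
    rw [hDX] at *
    linarith only [this]
  -- sequences
  set Φ : ℕ → EuclideanSpace ℝ (Fin n) := fun k => F (x k) + η • H (x k) with hΦ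
  set u : ℕ → ℝ := fun i => ⟪Φ (i+2), x (i+2) - z⟫ with hu
  set a : ℕ → ℝ := fun i => ‖x (i+1) - z‖ ^ 2 with ha
  set p : ℕ → ℝ := fun i => ⟪Φ (i+1) - Φ i, x (i+1) - z⟫ with hp
  set d : ℕ → ℝ := fun i => ‖x (i+2) - x (i+1)‖ with hd
  set d' : ℕ → ℝ := fun i => ‖x (i+1) - x i‖ with hd'
  set w : ℕ → ℝ := fun i => ‖Φ (i+1) - Φ i‖ with hw
  -- three-point inequality per step
  have hTP : ∀ i < N, ⟪Φ (i+1) + (Φ (i+1) - Φ i), x (i+2) - z⟫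
      ≤ c * (a i - ‖x (i+2) - z‖ ^ 2 - d i ^ 2) := by
    intro i hi
    have h := hopt (i+1) (by omega) (by omega)
    simp only [Nat.add_sub_cancel] at h
    have hxp : x (i+2) ∈ X := hiter (i+2) (by omega)
    have h3 := three_point (g := F (x (i+1)) + η • H (x (i+1))
        + (F (x (i+1)) + η • H (x (i+1)) - F (x i) - η • H (x i)))
      (xk := x (i+1)) (xp := x (i+2)) hXconv hxp hzX (c := c)
      (fun w hw => by
        have := h w hw
        rw [hc]
        convert this using 2 <;> norm_num)
    have hgeq : F (x (i+1)) + η • H (x (i+1))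
        + (F (x (i+1)) + η • H (x (i+1)) - F (x i) - η • H (x i))
        = Φ (i+1) + (Φ (i+1) - Φ i) := by
      simp only [hΦ]; abel
    rw [hgeq] at h3
    convert h3 using 2
  -- per-step decomposition
  have hstep : ∀ i < N, u i ≤ c * (a i - a (i+1)) + (p (i+1) - p i) + (w i * d i - c * d i ^ 2) := by
    intro i hi
    have hid : u i = ⟪Φ (i+1) + (Φ (i+1) - Φ i), x (i+2) - z⟫ + p (i+1) - p i
        - ⟪Φ (i+1) - Φ i, x (i+2) - x (i+1)⟫ := by
      simp only [hu, hp, Nat.add_sub_cancel]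
      simp only [inner_add_left, inner_sub_left, inner_sub_right]
      ring
    have habs : -⟪Φ (i+1) - Φ i, x (i+2) - x (i+1)⟫ ≤ w i * d i := by
      have h1 := abs_real_inner_le_norm (Φ (i+1) - Φ i) (x (i+2) - x (i+1))
      have h2 := neg_abs_le (⟪Φ (i+1) - Φ i, x (i+2) - x (i+1)⟫ : ℝ)
      simp only [hw, hd]
      linarith only [h1, h2]
    have h3 := hTP i hi
    have haa : ‖x (i+2) - z‖ ^ 2 = a (i+1) := rfl
    rw [haa] at h3
    linarith only [hid, h3, habs]
  -- sum the steps
  have hsum1 : ∑ i ∈ Finset.range N, u i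
      ≤ c * (a 0 - a N) + (p N - p 0) + ∑ i ∈ Finset.range N, (w i * d i - c * d i ^ 2) := by
    have h1 : ∑ i ∈ Finset.range N, u i
        ≤ ∑ i ∈ Finset.range N, (c * (a i - a (i+1)) + (p (i+1) - p i) + (w i * d i - c * d i ^ 2)) :=
      Finset.sum_le_sum (fun i hi => hstep i (Finset.mem_range.mp hi))
    have h2 : ∑ i ∈ Finset.range N, (c * (a i - a (i+1)) + (p (i+1) - p i) + (w i * d i - c * d i ^ 2))
        = c * ∑ i ∈ Finset.range N, (a i - a (i+1)) + ∑ i ∈ Finset.range N, (p (i+1) - p i)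
          + ∑ i ∈ Finset.range N, (w i * d i - c * d i ^ 2) := by
      rw [Finset.mul_sum, ← Finset.sum_add_distrib, ← Finset.sum_add_distrib]
    rw [h2, Finset.sum_range_sub' a, Finset.sum_range_sub p] at h1
    exact h1
  have hp0 : p 0 = 0 := by
    simp only [hp, hΦ]
    rw [← hx01]
    simp
  -- bound w
  have hwb : ∀ i, i ≤ N → w i ≤ Lb * d' i + Mb := by
    intro i hi
    have hxi : x i ∈ X := hiter i (by omega)
    have hxi1 : x (i+1) ∈ X := hiter (i+1) (by omega)
    have hsplit : Φ (i+1) - Φ i = (F (x (i+1)) - F (x i)) + η • (H (x (i+1)) - H (x i)) := by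
      simp only [hΦ, smul_sub]; abel
    have h1 : w i ≤ ‖F (x (i+1)) - F (x i)‖ + η * ‖H (x (i+1)) - H (x i)‖ := by
      simp only [hw, hsplit]
      refine (norm_add_le _ _).trans ?_
      rw [norm_smul, Real.norm_eq_abs, abs_of_pos hηpos]
    have h2 := hFlip _ hxi1 _ hxi
    have h3 := hHlip _ hxi1 _ hxi
    have h4 : η * ‖H (x (i+1)) - H (x i)‖ ≤ η * (LH * ‖x (i+1) - x i‖ + MH) :=
      mul_le_mul_of_nonneg_left h3 hηpos.le
    simp only [hd', hLb, hMb]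
    have e : (LF + η * LH) * ‖x (i+1) - x i‖ + (MF + η * MH)
        = (LF * ‖x (i+1) - x i‖ + MF) + η * (LH * ‖x (i+1) - x i‖ + MH) := by ring
    rw [e]
    have h5 := add_le_add h2 h4
    linarith only [h1, h5]
  -- error sum bound
  have hEptwise : ∀ i < N, w i * d i - c * d i ^ 2
      ≤ (Lb / 2) * d' i ^ 2 + ((Lb / 2) * d i ^ 2 + Mb * d i - c * d i ^ 2) := by
    intro i hi
    have h1 := hwb i (le_of_lt hi)
    have hdnn : 0 ≤ d i := norm_nonneg _
    exact scal1 h1 hdnn hLbnn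
  have hd'sum : ∑ i ∈ Finset.range N, d' i ^ 2 ≤ ∑ i ∈ Finset.range N, d i ^ 2 := by
    obtain ⟨m, hm⟩ : ∃ m, N = m + 1 := ⟨N - 1, by omega⟩
    rw [hm]
    rw [Finset.sum_range_succ' (fun i => d' i ^ 2) m, Finset.sum_range_succ (fun i => d i ^ 2) m]
    have hdd' : ∀ i, d' (i+1) = d i := fun i => rfl
    have hd'0 : d' 0 = 0 := by simp only [hd']; rw [← hx01]; simp
    simp only [hdd', hd'0]
    linarith only [sq_nonneg (d m)]
  have hEpt2 : ∀ i < N, Lb * d i ^ 2 + Mb * d i - c * d i ^ 2 ≤ γ * Mb ^ 2 := by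
    intro i hi
    have hdnn : 0 ≤ d i := norm_nonneg _
    have key : 2 * c * (Lb * d i ^ 2 + Mb * d i - c * d i ^ 2) ≤ Mb ^ 2 := by
      nlinarith only [sq_nonneg (2 * Mb - 3 * c * (d i)),
        mul_nonneg (mul_nonneg hcpos.le (sub_nonneg.mpr hcL)) (sq_nonneg (d i)), hdnn, hcpos.le, hMbnn]
    have e : γ * (2 * c * (Lb * d i ^ 2 + Mb * d i - c * d i ^ 2))
        = Lb * d i ^ 2 + Mb * d i - c * d i ^ 2 := by
      calc γ * (2 * c * (Lb * d i ^ 2 + Mb * d i - c * d i ^ 2))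
          = (2 * γ * c) * (Lb * d i ^ 2 + Mb * d i - c * d i ^ 2) := by ring
        _ = 1 * (Lb * d i ^ 2 + Mb * d i - c * d i ^ 2) := by rw [hcγ]
        _ = _ := one_mul _
    have h2 := mul_le_mul_of_nonneg_left key hγpos.le
    rw [e] at h2
    linarith only [key, h2]
  have hEsum : ∑ i ∈ Finset.range N, (w i * d i - c * d i ^ 2) ≤ (N:ℝ) * (γ * Mb ^ 2) := by
    calc ∑ i ∈ Finset.range N, (w i * d i - c * d i ^ 2)
        ≤ ∑ i ∈ Finset.range N, ((Lb / 2) * d' i ^ 2 + ((Lb / 2) * d i ^ 2 + Mb * d i - c * d i ^ 2)) :=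
          Finset.sum_le_sum (fun i hi => hEptwise i (Finset.mem_range.mp hi))
      _ = (Lb / 2) * ∑ i ∈ Finset.range N, d' i ^ 2
          + ∑ i ∈ Finset.range N, ((Lb / 2) * d i ^ 2 + Mb * d i - c * d i ^ 2) := by
          rw [Finset.mul_sum, ← Finset.sum_add_distrib]
      _ ≤ (Lb / 2) * ∑ i ∈ Finset.range N, d i ^ 2
          + ∑ i ∈ Finset.range N, ((Lb / 2) * d i ^ 2 + Mb * d i - c * d i ^ 2) := by
          have := mul_le_mul_of_nonneg_left hd'sum (by positivity : (0:ℝ) ≤ Lb / 2)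
          linarith only [this]
      _ = ∑ i ∈ Finset.range N, (Lb * d i ^ 2 + Mb * d i - c * d i ^ 2) := by
          rw [Finset.mul_sum, ← Finset.sum_add_distrib]
          congr 1; ext i; ring
      _ ≤ ∑ i ∈ Finset.range N, γ * Mb ^ 2 :=
          Finset.sum_le_sum (fun i hi => hEpt2 i (Finset.mem_range.mp hi))
      _ = (N:ℝ) * (γ * Mb ^ 2) := by
          rw [Finset.sum_const, Finset.card_range, nsmul_eq_mul]
  -- boundary terms
  have ha0 : a 0 ≤ 4 * DX ^ 2 := by
    have := hdiam (x 1) hx1 z hzX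
    simp only [ha]
    nlinarith only [this, norm_nonneg (x 1 - z), hDXpos.le]
  have hpN : p N ≤ (Lb * (2 * DX) + Mb) * (2 * DX) := by
    have h1 : p N ≤ w N * ‖x (N+1) - z‖ := by
      simp only [hp, hw]
      exact real_inner_le_norm _ _
    have h2 := hwb N le_rfl
    have h3 : d' N ≤ 2 * DX := by
      simp only [hd']
      exact hdiam (x (N+1)) (hiter (N+1) (by omega)) (x N) (hiter N (by omega))
    have h4 : ‖x (N+1) - z‖ ≤ 2 * DX := hdiam (x (N+1)) (hiter (N+1) (by omega)) z hzX
    have h5 : w N ≤ Lb * (2 * DX) + Mb := by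
      nlinarith only [mul_le_mul_of_nonneg_left h3 hLbnn, h2]
    calc p N ≤ w N * ‖x (N+1) - z‖ := h1
      _ ≤ (Lb * (2 * DX) + Mb) * (2 * DX) := by
          have hwnn : (0:ℝ) ≤ w N := by simp only [hw]; exact norm_nonneg _
          exact mul_le_mul h5 h4 (norm_nonneg _) (by positivity)
  -- collect the upper bound
  have hsqrtKQ : Real.sqrt ((K:ℝ) * Q2) ≤ Real.sqrt (K:ℝ) * Mb := by
    rw [Real.sqrt_mul hK0.le]
    have h1 : Real.sqrt Q2 ≤ Mb := by
      rw [show Mb = Real.sqrt (Mb ^ 2) by rw [Real.sqrt_sq hMbnn]]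
      apply Real.sqrt_le_sqrt
      simp only [hQ2, hMb]
      nlinarith only [mul_nonneg hMF (mul_nonneg hηpos.le hMH)]
    exact mul_le_mul_of_nonneg_left h1 (Real.sqrt_nonneg _)
  have hsqK1 : 1 ≤ Real.sqrt (K:ℝ) := by
    rw [show (1:ℝ) = Real.sqrt 1 by simp]
    exact Real.sqrt_le_sqrt hK1
  have hNM : (N:ℝ) * (γ * Mb ^ 2) ≤ 2 * DX * (Real.sqrt (K:ℝ) * Mb) := by
    have hγsq : γ * Real.sqrt ((K:ℝ) * Q2) ≤ DX := by
      have h1 : Real.sqrt ((K:ℝ) * Q2) ≤ S := by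
        simp only [hS]
        nlinarith only [mul_nonneg (mul_nonneg (by norm_num : (0:ℝ) ≤ 8) hDXpos.le) hLbnn]
      nlinarith only [h1, hγS, hγpos.le]
    have hMb2 : Mb ^ 2 ≤ 2 * Q2 := by
      simp only [hMb, hQ2]; nlinarith only [sq_nonneg (MF - η * MH)]
    have hNK : (N:ℝ) ≤ (K:ℝ) := by exact_mod_cast Nat.sub_le K 1
    have hsq2 : Real.sqrt ((K:ℝ) * Q2) ^ 2 = (K:ℝ) * Q2 := Real.sq_sqrt (by positivity)
    have key : (K:ℝ) * (γ * (2 * Q2)) ≤ 2 * DX * Real.sqrt ((K:ℝ) * Q2) := by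
      nlinarith only [hγsq, Real.sqrt_nonneg ((K:ℝ) * Q2), hγpos.le, hsq2]
    have h5 : (N:ℝ) * (γ * Mb ^ 2) ≤ (K:ℝ) * (γ * (2 * Q2)) := by
      have t1 : 0 ≤ ((K:ℝ) - (N:ℝ)) * (γ * Mb ^ 2) :=
        mul_nonneg (by linarith only [hNK]) (mul_nonneg hγpos.le (sq_nonneg Mb))
      have t2 : 0 ≤ (K:ℝ) * γ * (2 * Q2 - Mb ^ 2) :=
        mul_nonneg (mul_nonneg hK0.le hγpos.le) (by linarith only [hMb2])
      linarith only [t1, t2]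
    nlinarith only [h5, key, hsqrtKQ, hDXpos.le]
  set B : ℝ := 20 * DX ^ 2 * Lb + 6 * DX * (Real.sqrt (K:ℝ) * Mb) with hB
  have hUpper : ∑ i ∈ Finset.range N, u i ≤ B := by
    have haN : 0 ≤ a N := sq_nonneg _
    have hca0 : c * a 0 ≤ 2 * DX * S := by
      rw [hcS]
      rw [div_mul_eq_mul_div, div_le_iff₀ (by positivity)]
      nlinarith only [ha0, hSpos.le, hDXpos.le]
    have h2DS : 2 * DX * S ≤ 16 * DX ^ 2 * Lb + 2 * DX * (Real.sqrt (K:ℝ) * Mb) := by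
      simp only [hS]
      nlinarith only [hsqrtKQ, hDXpos.le]
    have hMbsK : Mb ≤ Real.sqrt (K:ℝ) * Mb := by nlinarith only [hsqK1, hMbnn]
    have hpNb : p N ≤ 4 * DX ^ 2 * Lb + 2 * DX * (Real.sqrt (K:ℝ) * Mb) := by
      nlinarith only [hpN, hDXpos.le, hMbsK]
    have hcaN : 0 ≤ c * a N := mul_nonneg hcpos.le haN
    calc ∑ i ∈ Finset.range N, u i
        ≤ c * (a 0 - a N) + (p N - p 0) + ∑ i ∈ Finset.range N, (w i * d i - c * d i ^ 2) := hsum1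
      _ ≤ c * a 0 + p N + (N:ℝ) * (γ * Mb ^ 2) := by rw [hp0]; linarith only [hEsum, hcaN]
      _ ≤ B := by simp only [hB]; linarith only [hca0, h2DS, hpNb, hNM]
  -- lower bound via monotonicity
  set xbar : EuclideanSpace ℝ (Fin n) := ((K : ℝ) - 1)⁻¹ • ∑ k ∈ Finset.Icc 1 (K - 1), x (k + 1) with hxbar
  have hNR : ((K:ℝ) - 1) = (N:ℝ) := by
    rw [hKN]; push_cast; ring
  have hNRpos : (0:ℝ) < (N:ℝ) := by exact_mod_cast hN1
  have hIcc : ∑ k ∈ Finset.Icc 1 (K - 1), x (k + 1) = ∑ i ∈ Finset.range N, x (i + 2) := by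
    show _ = ∑ i ∈ Finset.range (K - 1), x (i + 2)
    rw [← Finset.Ico_add_one_right_eq_Icc, Finset.sum_Ico_eq_sum_range]
    simp only [Nat.add_sub_cancel]
    refine Finset.sum_congr rfl (fun i _ => ?_)
    have e : 1 + i + 1 = i + 2 := by omega
    rw [e]
  have hsum_eq : (N:ℝ) * ⟪H z, xbar - z⟫ = ∑ i ∈ Finset.range N, ⟪H z, x (i+2) - z⟫ := by
    have e1 : ∑ i ∈ Finset.range N, (⟪H z, x (i+2) - z⟫ : ℝ)
        = ∑ i ∈ Finset.range N, ((⟪H z, x (i+2)⟫ : ℝ) - ⟪H z, z⟫) := by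
      congr 1; ext i; rw [inner_sub_right]
    have e2 : (⟪H z, xbar⟫ : ℝ) = (N:ℝ)⁻¹ * ∑ i ∈ Finset.range N, (⟪H z, x (i+2)⟫ : ℝ) := by
      rw [hxbar, hIcc, hNR, real_inner_smul_right, inner_sum]
    rw [e1, Finset.sum_sub_distrib, Finset.sum_const, Finset.card_range, nsmul_eq_mul]
    rw [inner_sub_right, e2]
    field_simp
    all_goals ring
  have hlow : ∀ i < N, η * ⟪H z, x (i+2) - z⟫ ≤ u i := by
    intro i hi
    have hxi2 : x (i+2) ∈ X := hiter (i+2) (by omega)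
    have h1 : (0:ℝ) ≤ ⟪F (x (i+2)) - F z, x (i+2) - z⟫ := hFmono _ hxi2 _ hzX
    have h2 : (0:ℝ) ≤ ⟪F z, x (i+2) - z⟫ := hzsol _ hxi2
    have h3 : (0:ℝ) ≤ ⟪H (x (i+2)) - H z, x (i+2) - z⟫ := hHmono _ hxi2 _ hzX
    have hui : u i = ⟪F (x (i+2)), x (i+2) - z⟫ + η * ⟪H (x (i+2)), x (i+2) - z⟫ := by
      simp only [hu, hΦ, inner_add_left, real_inner_smul_left]
    rw [inner_sub_left] at h1 h3
    have h4 : η * ⟪H z, x (i+2) - z⟫ ≤ η * ⟪H (x (i+2)), x (i+2) - z⟫ :=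
      mul_le_mul_of_nonneg_left (by linarith only [h3]) hηpos.le
    rw [hui]
    linarith only [h1, h2, h4]
  have hLower : η * ((N:ℝ) * ⟪H z, xbar - z⟫) ≤ ∑ i ∈ Finset.range N, u i := by
    rw [hsum_eq, Finset.mul_sum]
    exact Finset.sum_le_sum (fun i hi => hlow i (Finset.mem_range.mp hi))
  -- parameter algebra
  set s : ℝ := (K:ℝ) ^ ((1:ℝ)/4) with hs
  have hspos : 0 < s := by rw [hs]; positivity
  have hs1 : 1 ≤ s := Real.one_le_rpow hK1 (by norm_num)
  have hs4 : s ^ 4 = (K:ℝ) := by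
    rw [hs, ← Real.rpow_natCast ((K:ℝ) ^ ((1:ℝ)/4)) 4, ← Real.rpow_mul hK0.le]
    norm_num
  have hs3 : (K:ℝ) ^ ((3:ℝ)/4) = s ^ 3 := by
    rw [hs, ← Real.rpow_natCast ((K:ℝ) ^ ((1:ℝ)/4)) 3, ← Real.rpow_mul hK0.le]
    norm_num
  have hs2 : (K:ℝ) ^ ((1:ℝ)/2) = s ^ 2 := by
    rw [hs, ← Real.rpow_natCast ((K:ℝ) ^ ((1:ℝ)/4)) 2, ← Real.rpow_mul hK0.le]
    norm_num
  have hsqrtK : Real.sqrt (K:ℝ) = s ^ 2 := by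
    rw [Real.sqrt_eq_rpow, hs2]
  have hηs : η * s = 1 := by
    rw [hη, hs, ← Real.rpow_add hK0]
    norm_num
  have hηinv : η = s⁻¹ := by
    field_simp at hηs ⊢
    linarith only [hηs]
  have hNs : (N:ℝ) = s ^ 4 - 1 := by rw [← hNR, ← hs4]
  have hs42 : (2:ℝ) ≤ s ^ 4 := by rw [hs4]; exact hK2
  set RHSv : ℝ := 40 * DX * (DX * LF / (K : ℝ) ^ ((3 : ℝ) / 4) + DX * LH / (K : ℝ)
      + MF / (K : ℝ) ^ ((1 : ℝ) / 4) + MH / (K : ℝ) ^ ((1 : ℝ) / 2)) with hRHSv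
  have hRHsimp : RHSv = 40 * DX * (DX * LF / s ^ 3 + DX * LH / s ^ 4 + MF / s + MH / s ^ 2) := by
    rw [hRHSv, hs3, hs2, ← hs, ← hs4]
  have hRHSnn : 0 ≤ RHSv := by
    rw [hRHsimp]
    have := hspos
    positivity
  have hhalf : s ^ 3 / 2 ≤ η * (N:ℝ) := by
    have e : s ^ 3 = η * s ^ 4 := by
      calc s ^ 3 = s ^ 3 * (η * s) := by rw [hηs]; ring
        _ = η * s ^ 4 := by ring
    rw [hNs, e]
    linarith only [mul_nonneg hηpos.le (by linarith only [hs42] : (0:ℝ) ≤ s ^ 4 - 2)]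
  have hBR : B ≤ (s ^ 3 / 2) * RHSv := by
    have e1 : (s ^ 3 / 2) * RHSv
        = 20 * DX * (DX * LF + DX * LH / s + MF * s ^ 2 + MH * s) := by
      rw [hRHsimp]
      field_simp
      ring
    rw [e1, hB, hsqrtK, hLb, hMb, hηinv]
    exact scal2 hDXpos.le hspos hMF hMH
  -- combine
  have hfinal : ⟪H z, xbar - z⟫ ≤ RHSv := by
    have hpos : 0 < η * (N:ℝ) := by positivity
    have h1 : η * ((N:ℝ) * ⟪H z, xbar - z⟫) ≤ B := le_trans hLower hUpper
    have h2 : B ≤ (η * (N:ℝ)) * RHSv := by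
      calc B ≤ (s ^ 3 / 2) * RHSv := hBR
        _ ≤ (η * (N:ℝ)) * RHSv := mul_le_mul_of_nonneg_right hhalf hRHSnn
    have h3 : (η * (N:ℝ)) * ⟪H z, xbar - z⟫ ≤ (η * (N:ℝ)) * RHSv := by
      calc (η * (N:ℝ)) * ⟪H z, xbar - z⟫ = η * ((N:ℝ) * ⟪H z, xbar - z⟫) := by ring
        _ ≤ B := h1
        _ ≤ (η * (N:ℝ)) * RHSv := h2
    exact le_of_mul_le_mul_left h3 hpos
  exact hfinal

end main

theorem ropex_optimality_rate_monotone :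
    ∃ C : ℝ, 0 < C ∧
      ∀ (n : ℕ) (X : Set (EuclideanSpace ℝ (Fin n)))
        (F H : EuclideanSpace ℝ (Fin n) → EuclideanSpace ℝ (Fin n))
        (LF MF LH MH DX : ℝ) (K : ℕ) (η γ : ℝ)
        (x : ℕ → EuclideanSpace ℝ (Fin n)),
        X.Nonempty → IsCompact X → Convex ℝ X →
        DX = Metric.diam X / 2 → 0 < DX →
        0 ≤ LF → 0 ≤ MF → 0 ≤ LH → 0 ≤ MH →
        (∀ a ∈ X, ∀ b ∈ X, 0 ≤ ⟪F a - F b, a - b⟫) →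
        (∀ a ∈ X, ∀ b ∈ X, 0 ≤ ⟪H a - H b, a - b⟫) →
        (∀ a ∈ X, ∀ b ∈ X, ‖F a - F b‖ ≤ LF * ‖a - b‖ + MF) →
        (∀ a ∈ X, ∀ b ∈ X, ‖H a - H b‖ ≤ LH * ‖a - b‖ + MH) →
        (VISol F X).Nonempty →
        2 ≤ K →
        η = (K : ℝ) ^ (-(1 / 4 : ℝ)) →
        0 < 8 * DX * (LF + η * LH) + Real.sqrt (K * (MF ^ 2 + η ^ 2 * MH ^ 2)) →
        γ = DX / (8 * DX * (LF + η * LH) + Real.sqrt (K * (MF ^ 2 + η ^ 2 * MH ^ 2))) →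
        x 0 = x 1 → x 1 ∈ X →
        (∀ k, 1 ≤ k → k ≤ K - 1 → x (k + 1) ∈ X) →
        (∀ k, 1 ≤ k → k ≤ K - 1 → ∀ z ∈ X,
          ⟪F (x k) + η • H (x k)
              + (F (x k) + η • H (x k) - F (x (k - 1)) - η • H (x (k - 1))), x (k + 1)⟫
              + 1 / (2 * γ) * ‖x (k + 1) - x k‖ ^ 2
            ≤ ⟪F (x k) + η • H (x k)
              + (F (x k) + η • H (x k) - F (x (k - 1)) - η • H (x (k - 1))), z⟫
              + 1 / (2 * γ) * ‖z - x k‖ ^ 2) →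
        Gap H (VISol F X) (((K : ℝ) - 1)⁻¹ • ∑ k ∈ Finset.Icc 1 (K - 1), x (k + 1))
          ≤ ((C * DX * (DX * LF / (K : ℝ) ^ ((3 : ℝ) / 4) + DX * LH / (K : ℝ)
              + MF / (K : ℝ) ^ ((1 : ℝ) / 4) + MH / (K : ℝ) ^ ((1 : ℝ) / 2)) : ℝ) : EReal) := by
  refine ⟨40, by norm_num, ?_⟩
  intro n X F H LF MF LH MH DX K η γ x hXne hXc hXconv hDX hDXpos hLF hMF hLH hMH
    hFmono hHmono hFlip hHlip hsol hK hη hden hγ hx01 hx1 hxmem hopt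
  simp only [Gap]
  refine iSup₂_le fun y hy => ?_
  refine EReal.coe_le_coe_iff.mpr ?_
  exact ropex_core hXne hXc hXconv hDX hDXpos hLF hMF hLH hMH hFmono hHmono hFlip hHlip
    hK hη hden hγ hx01 hx1 hxmem hopt y hy.1 hy.2
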